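/- For every formula A there exists an A-reducing mapping ℛ_A : 𝒫₁ × 𝒫₁ → 𝒫₁, i.e., a nonexpansive map such that ℛ_A(π′, π″) is an ∞-proof of Γ ⇒ Δ whenever π′ is an ∞-proof of Γ ⇒ Δ, A and π″ is an ∞-proof of A, Γ ⇒ Δ, both in 𝒫₁. -/

import Mathlib

/-- Modal formulas of the Grzegorczyk logic: ⊥, atoms, →, □. -/
inductive Formula : Type
  | bot : Formula
  | atom : ℕ → Formula
  | imp : Formula → Formula → Formula
  | box : Formula → Formula
deriving DecidableEq

/-- A sequent Γ ⇒ Δ is a pair of finite multisets of formulas. -/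
abbrev Sequent : Type := Multiset Formula × Multiset Formula

/-- Names of the inference rules of Grz∞ + cut (including the two kinds of initial sequents). -/
inductive Rule : Type
  | ax | axBot | impL | impR | refl | box | cut
deriving DecidableEq

/-- □Π for a multiset Π. -/
def boxed (P : Multiset Formula) : Multiset Formula := P.map Formula.box

/-- `Inst r s p₁ p₂` : the rule `r` has a (correct) instance with conclusion `s`,
first premise `p₁` and second premise `p₂` (`none` = no such premise). -/
inductive Inst : Rule → Sequent → Option Sequent → Option Sequent → Prop
  | ax (Γ Δ : Multiset Formula) (p : ℕ) :
      Inst .ax (Formula.atom p ::ₘ Γ, Formula.atom p ::ₘ Δ) none none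
  | axBot (Γ Δ : Multiset Formula) :
      Inst .axBot (Formula.bot ::ₘ Γ, Δ) none none
  | impL (Γ Δ : Multiset Formula) (A B : Formula) :
      Inst .impL (Formula.imp A B ::ₘ Γ, Δ) (some (B ::ₘ Γ, Δ)) (some (Γ, A ::ₘ Δ))
  | impR (Γ Δ : Multiset Formula) (A B : Formula) :
      Inst .impR (Γ, Formula.imp A B ::ₘ Δ) (some (A ::ₘ Γ, B ::ₘ Δ)) none
  | refl (Γ Δ : Multiset Formula) (A : Formula) :
      Inst .refl (Formula.box A ::ₘ Γ, Δ) (some (A ::ₘ Formula.box A ::ₘ Γ, Δ)) none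
  | box (Γ Δ : Multiset Formula) (A : Formula) (P : Multiset Formula) :
      Inst .box (Γ + boxed P, Formula.box A ::ₘ Δ) (some (Γ + boxed P, A ::ₘ Δ))
        (some (boxed P, {A}))
  | cut (Γ Δ : Multiset Formula) (A : Formula) :
      Inst .cut (Γ, Δ) (some (Γ, A ::ₘ Δ)) (some (A ::ₘ Γ, Δ))

/-- A labelling of tree addresses (lists of booleans; `true` = second/right child)
by a rule name together with a sequent; `none` means the address is outside the tree. -/
abbrev Lab : Type := List Bool → Option (Rule × Sequent)

/-- The labelling of the subtree at child `i`. -/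
def shift (i : Bool) (l : Lab) : Lab := fun a => l (i :: a)

/-- An ∞-proof in Grz∞ + cut: a possibly infinite tree of sequents built according to
the rules, in which every infinite branch passes through the right premise of the
rule (□) infinitely many times. -/
structure InfProof : Type where
  lab : Lab
  root_some : (lab []).isSome
  nojunk : ∀ (a : List Bool) (i : Bool), lab a = none → lab (a ++ [i]) = none
  step : ∀ (a : List Bool) (r : Rule) (s : Sequent), lab a = some (r, s) →
      Inst r s ((lab (a ++ [false])).map Prod.snd) ((lab (a ++ [true])).map Prod.snd)
  branch : ∀ f : ℕ → Bool, (∀ n : ℕ, (lab ((List.range n).map f)).isSome) →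
      ∀ N : ℕ, ∃ n : ℕ, N ≤ n ∧ f n = true ∧
        (lab ((List.range n).map f)).map Prod.fst = some Rule.box

/-- The sequent at the root of an ∞-proof. -/
def rootSeq (π : InfProof) : Sequent := ((π.lab []).map Prod.snd).getD (0, 0)

/-- `Proves π S` : the ∞-proof `π` is an ∞-proof of the sequent `S`. -/
def Proves (π : InfProof) (S : Sequent) : Prop := ∃ r : Rule, π.lab [] = some (r, S)

/-- An ∞-proof contains no application of the cut rule (i.e. it is a proof of Grz∞). -/
def NoCut (π : InfProof) : Prop := ∀ (a : List Bool) (r : Rule) (s : Sequent),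
  π.lab a = some (r, s) → r ≠ Rule.cut

/-- Membership of an address in the main fragment: no proper passage through a
right premise of (□) strictly below it. -/
def InMain (l : Lab) (a : List Bool) : Prop :=
  (l a).isSome ∧ ∀ (b c : List Bool), a = b ++ true :: c →
    (l b).map Prod.fst = some Rule.box → c = []

/-- The local height |π| : the length of the longest branch in the main fragment. -/
noncomputable def height (l : Lab) : ℕ := sSup {n : ℕ | ∃ a : List Bool, InMain l a ∧ a.length = n}

/-- The relations ∼ₙ on ∞-proofs (presented on labellings), defined inductively:
π ∼₀ τ always; a single-node proof is ∼ₙ-related to itself; proofs ending in the same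
instance of (→L), (cut), (→R), (refl) are ∼ₙ-related when their immediate subproofs are;
proofs ending in the same instance of (□) are ∼ₙ₊₁-related when the left-premise subproofs
are ∼ₙ₊₁-related and the right-premise subproofs are ∼ₙ-related. -/
inductive Sim : ℕ → Lab → Lab → Prop
  | zero (l m : Lab) : Sim 0 l m
  | leaf (n : ℕ) (l : Lab) : height l = 0 → Sim n l l
  | bin (n : ℕ) (l m : Lab) (r : Rule) (s : Sequent) :
      (r = Rule.impL ∨ r = Rule.cut) →
      l [] = some (r, s) → m [] = some (r, s) →
      (l [false]).map Prod.snd = (m [false]).map Prod.snd →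
      (l [true]).map Prod.snd = (m [true]).map Prod.snd →
      Sim n (shift false l) (shift false m) → Sim n (shift true l) (shift true m) →
      Sim n l m
  | un (n : ℕ) (l m : Lab) (r : Rule) (s : Sequent) :
      (r = Rule.impR ∨ r = Rule.refl) →
      l [] = some (r, s) → m [] = some (r, s) →
      (l [false]).map Prod.snd = (m [false]).map Prod.snd →
      Sim n (shift false l) (shift false m) →
      Sim n l m
  | box (n : ℕ) (l m : Lab) (s : Sequent) :
      l [] = some (Rule.box, s) → m [] = some (Rule.box, s) →
      (l [false]).map Prod.snd = (m [false]).map Prod.snd →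
      (l [true]).map Prod.snd = (m [true]).map Prod.snd →
      Sim (n + 1) (shift false l) (shift false m) → Sim n (shift true l) (shift true m) →
      Sim (n + 1) l m

/-- The sets 𝒫ₙ of ∞-proofs (presented on labellings), defined inductively:
𝒫₀ is everything; single-node proofs are in every 𝒫ₙ; (→L), (→R), (refl) preserve
membership in 𝒫ₙ; a proof ending in (□) with left-premise subproof in 𝒫ₙ₊₁ and
right-premise subproof in 𝒫ₙ is in 𝒫ₙ₊₁. -/
inductive MemP : ℕ → Lab → Prop
  | zero (l : Lab) : MemP 0 l
  | leaf (n : ℕ) (l : Lab) : height l = 0 → MemP n l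
  | bin (n : ℕ) (l : Lab) (s : Sequent) :
      l [] = some (Rule.impL, s) →
      MemP n (shift false l) → MemP n (shift true l) → MemP n l
  | un (n : ℕ) (l : Lab) (r : Rule) (s : Sequent) :
      (r = Rule.impR ∨ r = Rule.refl) →
      l [] = some (r, s) → MemP n (shift false l) → MemP n l
  | box (n : ℕ) (l : Lab) (s : Sequent) :
      l [] = some (Rule.box, s) →
      MemP (n + 1) (shift false l) → MemP n (shift true l) → MemP (n + 1) l

/- The metric d(π,τ) = 2^(−sup{n : π ∼ₙ τ}), with 2^(−∞) = 0. -/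
open Classical in
noncomputable def pdist (π τ : InfProof) : ℝ :=
  if ∀ n : ℕ, Sim n π.lab τ.lab then 0
  else (2 : ℝ) ^ (-((sSup {n : ℕ | Sim n π.lab τ.lab} : ℕ) : ℤ))

/-- A mapping on ∞-proofs is nonexpansive if it preserves all relations ∼ₙ. -/
def Nonexpansive (f : InfProof → InfProof) : Prop :=
  ∀ (n : ℕ) (π τ : InfProof), Sim n π.lab τ.lab → Sim n (f π).lab (f τ).lab

/-- A mapping is adequate if it is nonexpansive, maps 𝒫₁ into 𝒫₁,
and does not increase local height. -/
def Adequate (f : InfProof → InfProof) : Prop :=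
  Nonexpansive f ∧ (∀ π : InfProof, MemP 1 π.lab → MemP 1 (f π).lab) ∧
    ∀ π : InfProof, height (f π).lab ≤ height π.lab

/-- The set 𝒫₁ of ∞-proofs whose main fragment is cut-free, as a subtype. -/
abbrev P1 : Type := {π : InfProof // MemP 1 π.lab}

/-- An A-reducing mapping: a nonexpansive map ℛ : 𝒫₁ × 𝒫₁ → 𝒫₁ such that
ℛ(π′,π″) proves Γ ⇒ Δ whenever π′ proves Γ ⇒ Δ, A and π″ proves A, Γ ⇒ Δ. -/
def Reducing (A : Formula) (R : P1 → P1 → P1) : Prop :=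
  (∀ (n : ℕ) (p₁ p₂ q₁ q₂ : P1), Sim n p₁.1.lab q₁.1.lab → Sim n p₂.1.lab q₂.1.lab →
      Sim n (R p₁ p₂).1.lab (R q₁ q₂).1.lab) ∧
  ∀ (p₁ p₂ : P1) (Γ Δ : Multiset Formula),
    Proves p₁.1 (Γ, A ::ₘ Δ) → Proves p₂.1 (A ::ₘ Γ, Δ) → Proves (R p₁ p₂).1 (Γ, Δ)

/-- A mapping is root-preserving if it maps ∞-proofs to ∞-proofs of the same sequent. -/
def RootPres (f : InfProof → InfProof) : Prop :=
  ∀ (π : InfProof) (S : Sequent), Proves π S → Proves (f π) S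

/-- The uniform distance on mappings of ∞-proofs. -/
noncomputable def udist (U V : InfProof → InfProof) : ℝ :=
  ⨆ π : InfProof, pdist (U π) (V π)

/- The immediate subproof of `π` at child `i` (junk value `π` if there is none). -/
open Classical in
noncomputable def subtree (π : InfProof) (i : Bool) : InfProof :=
  if h : ∃ τ : InfProof, τ.lab = shift i π.lab then h.choose else π

/-- `IsFOp E F` : `F` is the operator ℱ (relative to the one-step cut-elimination map
`E` = ℰ*) defined by: on proofs with cut-free main fragment it commutes with the last
rule, applying `U` at right premises of (□) and fixing single-node proofs; on other
proofs it first applies `E`. -/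
def IsFOp (E : InfProof → InfProof) (F : (InfProof → InfProof) → InfProof → InfProof) : Prop :=
  ∀ (U : InfProof → InfProof) (π : InfProof),
    (MemP 1 π.lab → height π.lab = 0 → F U π = π) ∧
    (∀ (r : Rule) (s : Sequent), MemP 1 π.lab → π.lab [] = some (r, s) →
        r ≠ Rule.box → r ≠ Rule.cut → height π.lab ≠ 0 →
        (F U π).lab [] = some (r, s) ∧
        shift false (F U π).lab = (F U (subtree π false)).lab ∧
        (r = Rule.impL → shift true (F U π).lab = (F U (subtree π true)).lab)) ∧
    (∀ s : Sequent, MemP 1 π.lab → π.lab [] = some (Rule.box, s) →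
        (F U π).lab [] = some (Rule.box, s) ∧
        shift false (F U π).lab = (F U (subtree π false)).lab ∧
        shift true (F U π).lab = (U (subtree π true)).lab) ∧
    (¬ MemP 1 π.lab → F U π = F U (E π))

/-- Membership in 𝒩ₙ : a root-preserving nonexpansive map whose image lies in 𝒫ₙ. -/
def InN (n : ℕ) (U : InfProof → InfProof) : Prop :=
  Nonexpansive U ∧ RootPres U ∧ ∀ π : InfProof, MemP n (U π).lab

/-- The finitary sequent calculus Grz_Seq (with cut allowed iff the flag is `true`). -/
inductive GrzSeq : Bool → Sequent → Prop
  | ax (c : Bool) (Γ Δ : Multiset Formula) (A : Formula) :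
      GrzSeq c (A ::ₘ Γ, A ::ₘ Δ)
  | bot (c : Bool) (Γ Δ : Multiset Formula) :
      GrzSeq c (Formula.bot ::ₘ Γ, Δ)
  | impL (c : Bool) (Γ Δ : Multiset Formula) (A B : Formula) :
      GrzSeq c (B ::ₘ Γ, Δ) → GrzSeq c (Γ, A ::ₘ Δ) →
      GrzSeq c (Formula.imp A B ::ₘ Γ, Δ)
  | impR (c : Bool) (Γ Δ : Multiset Formula) (A B : Formula) :
      GrzSeq c (A ::ₘ Γ, B ::ₘ Δ) → GrzSeq c (Γ, Formula.imp A B ::ₘ Δ)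
  | refl (c : Bool) (Γ Δ : Multiset Formula) (B : Formula) :
      GrzSeq c (B ::ₘ Formula.box B ::ₘ Γ, Δ) → GrzSeq c (Formula.box B ::ₘ Γ, Δ)
  | grz (c : Bool) (Γ Δ : Multiset Formula) (A : Formula) (P : Multiset Formula) :
      GrzSeq c (Formula.box (Formula.imp A (Formula.box A)) ::ₘ boxed P, {A}) →
      GrzSeq c (Γ + boxed P, Formula.box A ::ₘ Δ)
  | cut (Γ Δ : Multiset Formula) (A : Formula) :
      GrzSeq true (Γ, A ::ₘ Δ) → GrzSeq true (A ::ₘ Γ, Δ) → GrzSeq true (Γ, Δ)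

/-! ### Section 1: basic lab lemmas, height, Sim-reflexivity -/

open Classical

/-- A lab satisfying the local correctness conditions of an ∞-proof. -/
def GoodLab (l : Lab) : Prop :=
  (∀ (a : List Bool) (i : Bool), l a = none → l (a ++ [i]) = none) ∧
  (∀ (a : List Bool) (r : Rule) (s : Sequent), l a = some (r, s) →
      Inst r s ((l (a ++ [false])).map Prod.snd) ((l (a ++ [true])).map Prod.snd))

lemma InfProof.good (π : InfProof) : GoodLab π.lab := ⟨π.nojunk, π.step⟩

lemma GoodLab.shift {l : Lab} (h : GoodLab l) (i : Bool) : GoodLab (shift i l) := by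
  constructor
  · intro a j hn
    exact h.1 (i :: a) j hn
  · intro a r s hs
    exact h.2 (i :: a) r s hs

lemma none_forever {l : Lab} (h : ∀ (a : List Bool) (i : Bool), l a = none → l (a ++ [i]) = none)
    {a : List Bool} (ha : l a = none) : ∀ b, l (a ++ b) = none := by
  intro b
  induction b using List.reverseRecOn with
  | nil => simpa using ha
  | append_singleton b i ih =>
      have := h (a ++ b) i ih
      simpa [List.append_assoc] using this

/-- The set whose sup is the height. -/
def mainSet (l : Lab) : Set ℕ := {n : ℕ | ∃ a : List Bool, InMain l a ∧ a.length = n}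

lemma height_def (l : Lab) : height l = sSup (mainSet l) := rfl

lemma InMain_nil {l : Lab} (h : (l []).isSome) : InMain l [] := by
  refine ⟨h, ?_⟩
  intro b c hbc
  exact absurd hbc (by simp)

lemma height_eq_zero_of_root_none {l : Lab} (h : l [] = none)
    (nj : ∀ (a : List Bool) (i : Bool), l a = none → l (a ++ [i]) = none) :
    height l = 0 := by
  have : mainSet l = ∅ := by
    ext n
    simp only [mainSet, Set.mem_setOf_eq, Set.mem_empty_iff_false, iff_false]
    rintro ⟨a, ⟨hs, -⟩, -⟩
    have : l a = none := by
      have := none_forever nj h a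
      simpa using this
    rw [this] at hs; simp at hs
  rw [height_def, this, csSup_empty]
  rfl

lemma height_eq_zero_of_children_none {l : Lab} (h0 : (l []).isSome)
    (hf : l [false] = none) (ht : l [true] = none)
    (nj : ∀ (a : List Bool) (i : Bool), l a = none → l (a ++ [i]) = none) :
    height l = 0 := by
  have hall : ∀ (i : Bool) (b : List Bool), l (i :: b) = none := by
    intro i b
    have : l ([i] ++ b) = none := none_forever nj (by cases i <;> assumption) b
    simpa using this
  have : mainSet l = {0} := by
    ext n
    simp only [mainSet, Set.mem_setOf_eq, Set.mem_singleton_iff]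
    constructor
    · rintro ⟨a, ⟨hs, -⟩, hlen⟩
      cases a with
      | nil => simpa using hlen.symm
      | cons i b => rw [hall i b] at hs; simp at hs
    · rintro rfl
      exact ⟨[], InMain_nil h0, rfl⟩
  rw [height_def, this, csSup_singleton]

lemma InMain_of_shift {l : Lab} {i : Bool} {b : List Bool}
    (h : InMain (shift i l) b)
    (hcase : i = false ∨ (l []).map Prod.fst ≠ some Rule.box) :
    InMain l (i :: b) := by
  refine ⟨h.1, ?_⟩
  intro b' c hbc hbox
  cases b' with
  | nil =>
      simp only [List.nil_append, List.cons.injEq] at hbc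
      obtain ⟨hi, hc⟩ := hbc
      rcases hcase with h1 | h1
      · rw [h1] at hi; exact absurd hi (by simp)
      · exact absurd hbox h1
  | cons j b'' =>
      simp only [List.cons_append, List.cons.injEq] at hbc
      obtain ⟨hj, hb⟩ := hbc
      subst hj
      exact h.2 b'' c hb hbox

lemma height_ne_zero_bdd {l : Lab} (h : height l ≠ 0) : BddAbove (mainSet l) := by
  by_contra hb
  rw [height_def, csSup_of_not_bddAbove hb, csSup_empty] at h
  exact h rfl

lemma height_pos_mem {l : Lab} (h : height l ≠ 0) : height l ∈ mainSet l := by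
  have hb := height_ne_zero_bdd h
  have hne : (mainSet l).Nonempty := by
    by_contra hn
    rw [Set.not_nonempty_iff_eq_empty] at hn
    rw [height_def, hn, csSup_empty] at h
    exact h rfl
  exact Nat.sSup_mem hne hb

lemma height_root_some {l : Lab} (h : height l ≠ 0)
    (nj : ∀ (a : List Bool) (i : Bool), l a = none → l (a ++ [i]) = none) :
    ∃ r s, l [] = some (r, s) := by
  rcases height_pos_mem h with ⟨a, ⟨hs, -⟩, -⟩
  cases h0 : l [] with
  | none =>
      have : l a = none := by simpa using none_forever nj h0 a
      rw [this] at hs; simp at hs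
  | some x => exact ⟨x.1, x.2, rfl⟩

lemma height_shift_lt {l : Lab} {i : Bool} (h : height l ≠ 0)
    (hcase : i = false ∨ (l []).map Prod.fst ≠ some Rule.box) :
    height (shift i l) < height l := by
  have hb := height_ne_zero_bdd h
  have hpos : 0 < height l := Nat.pos_of_ne_zero h
  have hsub : ∀ n ∈ mainSet (shift i l), n + 1 ∈ mainSet l := by
    rintro n ⟨b, hm, hlen⟩
    exact ⟨i :: b, InMain_of_shift hm hcase, by simp [hlen]⟩
  by_cases hbb : BddAbove (mainSet (shift i l))
  · by_cases hne : (mainSet (shift i l)).Nonempty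
    · have hmem := Nat.sSup_mem hne hbb
      have h1 : height (shift i l) + 1 ≤ height l := le_csSup hb (hsub _ hmem)
      exact Nat.lt_of_succ_le h1
    · rw [Set.not_nonempty_iff_eq_empty] at hne
      rw [height_def, hne, csSup_empty]
      exact hpos
  · rw [height_def, csSup_of_not_bddAbove hbb, csSup_empty]
    exact hpos

/-- Reflexivity of `Sim` on locally correct labellings. -/
lemma sim_refl : ∀ (n : ℕ) (l : Lab), GoodLab l → Sim n l l := by
  intro n
  induction n with
  | zero => intro l _; exact Sim.zero l l
  | succ n IH =>
      have key : ∀ (k : ℕ) (l : Lab), GoodLab l → height l ≤ k → Sim (n+1) l l := by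
        intro k
        induction k using Nat.strong_induction_on with
        | _ k IH2 =>
          intro l hl hk
          by_cases h0 : height l = 0
          · exact Sim.leaf _ l h0
          · obtain ⟨r, s, hr⟩ := height_root_some h0 hl.1
            have hinst := hl.2 [] r s hr
            have hSim : ∀ i : Bool, (i = false ∨ (l []).map Prod.fst ≠ some Rule.box) →
                Sim (n+1) (shift i l) (shift i l) := by
              intro i hc
              have hlt : height (shift i l) < height l := height_shift_lt h0 hc
              exact IH2 (height (shift i l)) (lt_of_lt_of_le hlt hk) (shift i l)
                (hl.shift i) le_rfl
            have hnotbox : r ≠ Rule.box → (l []).map Prod.fst ≠ some Rule.box := by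
              intro hne hc
              rw [hr] at hc
              simp at hc
              exact hne hc
            have hdead : l ([] ++ [false]) = none → l ([] ++ [true]) = none → False := by
              intro hf ht
              simp only [List.nil_append] at hf ht
              exact h0 (height_eq_zero_of_children_none (by rw [hr]; rfl) hf ht hl.1)
            generalize hX : (l ([] ++ [false])).map Prod.snd = o1 at hinst
            generalize hY : (l ([] ++ [true])).map Prod.snd = o2 at hinst
            cases hinst with
            | ax Γ Δ p =>
                exact absurd (hdead (Option.map_eq_none_iff.mp hX) (Option.map_eq_none_iff.mp hY))
                  not_false
            | axBot Γ Δ =>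
                exact absurd (hdead (Option.map_eq_none_iff.mp hX) (Option.map_eq_none_iff.mp hY))
                  not_false
            | impL Γ Δ A B =>
                exact Sim.bin (n+1) l l .impL _ (Or.inl rfl) hr hr rfl rfl
                  (hSim false (Or.inl rfl))
                  (hSim true (Or.inr (hnotbox (by intro h; cases h))))
            | impR Γ Δ A B =>
                exact Sim.un (n+1) l l .impR _ (Or.inl rfl) hr hr rfl
                  (hSim false (Or.inl rfl))
            | refl Γ Δ A =>
                exact Sim.un (n+1) l l .refl _ (Or.inr rfl) hr hr rfl
                  (hSim false (Or.inl rfl))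
            | box Γ Δ A P =>
                exact Sim.box n l l _ hr hr rfl rfl
                  (hSim false (Or.inl rfl))
                  (IH (shift true l) (hl.shift true))
            | cut Γ Δ A =>
                exact Sim.bin (n+1) l l .cut _ (Or.inr rfl) hr hr rfl rfl
                  (hSim false (Or.inl rfl))
                  (hSim true (Or.inr (hnotbox (by intro h; cases h))))
      intro l hl
      exact key (height l) l hl le_rfl

lemma sim_refl_proof (n : ℕ) (π : InfProof) : Sim n π.lab π.lab :=
  sim_refl n π.lab π.good

lemma sim_root_eq {n : ℕ} {l m : Lab} (h : Sim (n+1) l m) : l [] = m [] := by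
  cases h with
  | leaf => rfl
  | bin n' l m r s hor h1 h2 => rw [h1, h2]
  | un n' l m r s hor h1 h2 => rw [h1, h2]
  | box n' l m s h1 h2 => rw [h1, h2]
/-! ### Section 2: Kripke semantics over finite posets, soundness of ∞-proofs -/

/-- Truth of a formula at a point of a (quasi)ordered set. -/
def Tr {W : Type} [LE W] (val : ℕ → W → Prop) : Formula → W → Prop
  | .bot, _ => False
  | .atom p, w => val p w
  | .imp A B, w => Tr val A w → Tr val B w
  | .box A, w => ∀ y : W, w ≤ y → Tr val A y

/-- Validity of a sequent over all finite partial orders. -/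
def Valid (S : Sequent) : Prop :=
  ∀ (W : Type) [PartialOrder W] [Finite W] (val : ℕ → W → Prop) (x : W),
    (∀ B ∈ S.1, Tr val B x) → ∃ C ∈ S.2, Tr val C x

section SoundnessSec

variable {W : Type} [PartialOrder W] {val : ℕ → W → Prop}

/-- The sequent `s` fails at the point `w`. -/
def Fails (val : ℕ → W → Prop) (s : Sequent) (w : W) : Prop :=
  (∀ B ∈ s.1, Tr val B w) ∧ (∀ C ∈ s.2, ¬ Tr val C w)

lemma fails_step (π : InfProof) (a : List Bool) (r : Rule) (s : Sequent)
    (hr : π.lab a = some (r, s)) (w : W) (hw : Fails val s w) :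
    ∃ (i : Bool) (r' : Rule) (s' : Sequent) (w' : W),
      π.lab (a ++ [i]) = some (r', s') ∧ Fails val s' w' ∧ w ≤ w' ∧
      (i = true ∧ r = Rule.box → w < w') := by
  have hinst := π.step a r s hr
  generalize hX : (π.lab (a ++ [false])).map Prod.snd = o1 at hinst
  generalize hY : (π.lab (a ++ [true])).map Prod.snd = o2 at hinst
  cases hinst with
  | ax Γ Δ p =>
      exact absurd (hw.1 _ (Multiset.mem_cons_self _ _))
        (hw.2 _ (Multiset.mem_cons_self _ _))
  | axBot Γ Δ =>
      exact absurd (hw.1 _ (Multiset.mem_cons_self _ _)) (by simp [Tr])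
  | impL Γ Δ A B =>
      obtain ⟨⟨r1, s1⟩, hl1, hs1⟩ := Option.map_eq_some_iff.mp hX
      obtain ⟨⟨r2, s2⟩, hl2, hs2⟩ := Option.map_eq_some_iff.mp hY
      simp only at hs1 hs2
      subst hs1; subst hs2
      have himp : Tr val (Formula.imp A B) w := hw.1 _ (Multiset.mem_cons_self _ _)
      by_cases hB : Tr val B w
      · refine ⟨false, r1, _, w, hl1, ⟨?_, ?_⟩, le_refl w, by simp⟩
        · intro X hX'
          rcases Multiset.mem_cons.mp hX' with rfl | hX'
          · exact hB
          · exact hw.1 _ (Multiset.mem_cons_of_mem hX')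
        · exact hw.2
      · have hA : ¬ Tr val A w := fun hA => hB (himp hA)
        refine ⟨true, r2, _, w, hl2, ⟨?_, ?_⟩, le_refl w, by simp⟩
        · intro X hX'
          exact hw.1 _ (Multiset.mem_cons_of_mem hX')
        · intro C hC
          rcases Multiset.mem_cons.mp hC with rfl | hC
          · exact hA
          · exact hw.2 _ hC
  | impR Γ Δ A B =>
      obtain ⟨⟨r1, s1⟩, hl1, hs1⟩ := Option.map_eq_some_iff.mp hX
      simp only at hs1
      subst hs1
      have himp : ¬ Tr val (Formula.imp A B) w := hw.2 _ (Multiset.mem_cons_self _ _)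
      have hAB : Tr val A w ∧ ¬ Tr val B w := by
        by_cases hA : Tr val A w
        · exact ⟨hA, fun hB => himp (fun _ => hB)⟩
        · exact absurd (fun h => absurd h hA : Tr val (Formula.imp A B) w) himp
      refine ⟨false, r1, _, w, hl1, ⟨?_, ?_⟩, le_refl w, by simp⟩
      · intro X hX'
        rcases Multiset.mem_cons.mp hX' with rfl | hX'
        · exact hAB.1
        · exact hw.1 _ hX'
      · intro C hC
        rcases Multiset.mem_cons.mp hC with rfl | hC
        · exact hAB.2
        · exact hw.2 _ (Multiset.mem_cons_of_mem hC)
  | refl Γ Δ A =>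
      obtain ⟨⟨r1, s1⟩, hl1, hs1⟩ := Option.map_eq_some_iff.mp hX
      simp only at hs1
      subst hs1
      have hbox : Tr val (Formula.box A) w := hw.1 _ (Multiset.mem_cons_self _ _)
      refine ⟨false, r1, _, w, hl1, ⟨?_, hw.2⟩, le_refl w, by simp⟩
      intro X hX'
      rcases Multiset.mem_cons.mp hX' with rfl | hX'
      · exact hbox w (le_refl w)
      · exact hw.1 _ hX'
  | box Γ Δ A P =>
      obtain ⟨⟨r1, s1⟩, hl1, hs1⟩ := Option.map_eq_some_iff.mp hX
      obtain ⟨⟨r2, s2⟩, hl2, hs2⟩ := Option.map_eq_some_iff.mp hY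
      simp only at hs1 hs2
      subst hs1; subst hs2
      have hnbox : ¬ Tr val (Formula.box A) w := hw.2 _ (Multiset.mem_cons_self _ _)
      by_cases hA : Tr val A w
      · -- go right, to a strictly bigger point
        have : ∃ y, w ≤ y ∧ ¬ Tr val A y := by
          by_contra hcon
          push_neg at hcon
          exact hnbox (fun y hy => hcon y hy)
        obtain ⟨y, hwy, hAy⟩ := this
        have hne : w ≠ y := fun he => hAy (he ▸ hA)
        refine ⟨true, r2, _, y, hl2, ⟨?_, ?_⟩, hwy, fun _ => lt_of_le_of_ne hwy hne⟩
        · intro X hX'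
          obtain ⟨B, hB, rfl⟩ := Multiset.mem_map.mp hX'
          have hXw : Tr val (Formula.box B) w :=
            hw.1 _ (by rw [Multiset.mem_add]; right; exact Multiset.mem_map_of_mem _ hB)
          intro z hz
          exact hXw z (le_trans hwy hz)
        · intro C hC
          rw [Multiset.mem_singleton] at hC
          subst hC
          exact hAy
      · refine ⟨false, r1, _, w, hl1, ⟨hw.1, ?_⟩, le_refl w, by simp⟩
        intro C hC
        rcases Multiset.mem_cons.mp hC with rfl | hC
        · exact hA
        · exact hw.2 _ (Multiset.mem_cons_of_mem hC)
  | cut Γ Δ A =>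
      obtain ⟨⟨r1, s1⟩, hl1, hs1⟩ := Option.map_eq_some_iff.mp hX
      obtain ⟨⟨r2, s2⟩, hl2, hs2⟩ := Option.map_eq_some_iff.mp hY
      simp only at hs1 hs2
      subst hs1; subst hs2
      by_cases hA : Tr val A w
      · refine ⟨true, r2, _, w, hl2, ⟨?_, hw.2⟩, le_refl w, by simp⟩
        intro X hX'
        rcases Multiset.mem_cons.mp hX' with rfl | hX'
        · exact hA
        · exact hw.1 _ hX'
      · refine ⟨false, r1, _, w, hl1, ⟨hw.1, ?_⟩, le_refl w, by simp⟩
        intro C hC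
        rcases Multiset.mem_cons.mp hC with rfl | hC
        · exact hA
        · exact hw.2 _ hC

end SoundnessSec

/-- Soundness of `Grz∞ + cut` with respect to finite partial orders. -/
lemma sound (π : InfProof) (S : Sequent) (h : Proves π S) : Valid S := by
  intro W _ _ val x hx
  by_contra hcon
  push_neg at hcon
  obtain ⟨r0, h0⟩ := h
  -- the type of failing positions
  let T := {p : List Bool × W // ∃ r s, π.lab p.1 = some (r, s) ∧ Fails val s p.2}
  have hstep : ∀ t : T, ∃ (i : Bool) (w' : W),
      (∃ r s, π.lab (t.1.1 ++ [i]) = some (r, s) ∧ Fails val s w') ∧ t.1.2 ≤ w' ∧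
      ((i = true ∧ (π.lab t.1.1).map Prod.fst = some Rule.box) → t.1.2 < w') := by
    rintro ⟨⟨a, w⟩, r, s, hr, hw⟩
    obtain ⟨i, r', s', w', h1, h2, h3, h4⟩ := fails_step π a r s hr w hw
    refine ⟨i, w', ⟨r', s', h1, h2⟩, h3, ?_⟩
    rintro ⟨hi, hbox⟩
    rw [hr] at hbox
    simp only [Option.map_some] at hbox
    exact h4 ⟨hi, by injection hbox⟩
  classical
  let t0 : T := ⟨([], x), r0, S, h0, hx, hcon⟩
  let g : ℕ → T := fun n => Nat.rec t0
    (fun _ t => ⟨(t.1.1 ++ [(hstep t).choose], (hstep t).choose_spec.choose),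
      (hstep t).choose_spec.choose_spec.1⟩) n
  have hg_succ : ∀ n, (g (n+1)).1.1 = (g n).1.1 ++ [(hstep (g n)).choose] := fun n => rfl
  let f : ℕ → Bool := fun n => (hstep (g n)).choose
  have haddr : ∀ n, (g n).1.1 = (List.range n).map f := by
    intro n
    induction n with
    | zero => rfl
    | succ n ih =>
        have ih' := congrArg (fun L => L ++ [f n]) ih
        rw [List.range_succ, List.map_append]
        exact ih'
  have hsome : ∀ n, (π.lab ((List.range n).map f)).isSome := by
    intro n
    obtain ⟨r, s, hr, -⟩ := (g n).2
    rw [← haddr n, hr]; rfl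
  have hmono : ∀ n, (g n).1.2 ≤ (g (n+1)).1.2 := by
    intro n
    exact (hstep (g n)).choose_spec.choose_spec.2.1
  have hmono' : Monotone (fun n => (g n).1.2) := monotone_nat_of_le_succ hmono
  have hinfstrict : ∀ N, ∃ n, N ≤ n ∧ (g n).1.2 < (g (n+1)).1.2 := by
    intro N
    obtain ⟨n, hn, hf, hbox⟩ := π.branch f hsome N
    refine ⟨n, hn, ?_⟩
    apply (hstep (g n)).choose_spec.choose_spec.2.2
    rw [← haddr n] at hbox
    exact ⟨hf, hbox⟩
  -- extract a strictly increasing sequence in W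
  let u : ℕ → ℕ := fun k => Nat.rec 0 (fun _ m => (hinfstrict m).choose + 1) k
  have hu : ∀ k, (g (u k)).1.2 < (g (u (k+1))).1.2 := by
    intro k
    have h1 := (hinfstrict (u k)).choose_spec
    calc (g (u k)).1.2 ≤ (g ((hinfstrict (u k)).choose)).1.2 := hmono' h1.1
      _ < (g ((hinfstrict (u k)).choose + 1)).1.2 := h1.2
  have hv : StrictMono (fun k => (g (u k)).1.2) := strictMono_nat_of_lt_succ hu
  have : Finite ℕ := Finite.of_injective _ hv.injective
  exact absurd this (by simp [not_finite_iff_infinite]; infer_instance)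
/-! ### Section 3: validity lemmas, forcedness, the proof-search machine -/

lemma valid_cut {Γ Δ : Multiset Formula} (A : Formula)
    (h1 : Valid (Γ, A ::ₘ Δ)) (h2 : Valid (A ::ₘ Γ, Δ)) : Valid (Γ, Δ) := by
  intro W _ _ val x hx
  obtain ⟨C, hC, hTrC⟩ := h1 W val x hx
  rcases Multiset.mem_cons.mp hC with rfl | hC
  · refine h2 W val x ?_
    intro B hB
    rcases Multiset.mem_cons.mp hB with rfl | hB
    · exact hTrC
    · exact hx B hB
  · exact ⟨C, hC, hTrC⟩

lemma valid_impL1 {Γ Δ : Multiset Formula} {A B : Formula}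
    (h : Valid (Formula.imp A B ::ₘ Γ, Δ)) : Valid (B ::ₘ Γ, Δ) := by
  intro W _ _ val x hx
  refine h W val x ?_
  intro X hX
  rcases Multiset.mem_cons.mp hX with rfl | hX
  · exact fun _ => hx B (Multiset.mem_cons_self _ _)
  · exact hx X (Multiset.mem_cons_of_mem hX)

lemma valid_impL2 {Γ Δ : Multiset Formula} {A B : Formula}
    (h : Valid (Formula.imp A B ::ₘ Γ, Δ)) : Valid (Γ, A ::ₘ Δ) := by
  intro W _ _ val x hx
  by_cases hA : Tr val A x
  · exact ⟨A, Multiset.mem_cons_self _ _, hA⟩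
  · obtain ⟨C, hC, hTrC⟩ := h W val x (by
      intro X hX
      rcases Multiset.mem_cons.mp hX with rfl | hX
      · exact fun hA' => absurd hA' hA
      · exact hx X hX)
    exact ⟨C, Multiset.mem_cons_of_mem hC, hTrC⟩

lemma valid_impR {Γ Δ : Multiset Formula} {A B : Formula}
    (h : Valid (Γ, Formula.imp A B ::ₘ Δ)) : Valid (A ::ₘ Γ, B ::ₘ Δ) := by
  intro W _ _ val x hx
  obtain ⟨C, hC, hTrC⟩ := h W val x
    (fun X hX => hx X (Multiset.mem_cons_of_mem hX))
  rcases Multiset.mem_cons.mp hC with rfl | hC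
  · exact ⟨B, Multiset.mem_cons_self _ _, hTrC (hx A (Multiset.mem_cons_self _ _))⟩
  · exact ⟨C, Multiset.mem_cons_of_mem hC, hTrC⟩

lemma valid_weakL {Γ Δ : Multiset Formula} (B : Formula)
    (h : Valid (Γ, Δ)) : Valid (B ::ₘ Γ, Δ) := by
  intro W _ _ val x hx
  exact h W val x (fun X hX => hx X (Multiset.mem_cons_of_mem hX))

lemma valid_boxL {Γ Δ : Multiset Formula} {A : Formula}
    (h : Valid (Γ, Formula.box A ::ₘ Δ)) : Valid (Γ, A ::ₘ Δ) := by
  intro W _ _ val x hx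
  obtain ⟨C, hC, hTrC⟩ := h W val x hx
  rcases Multiset.mem_cons.mp hC with rfl | hC
  · exact ⟨A, Multiset.mem_cons_self _ _, hTrC x (le_refl x)⟩
  · exact ⟨C, Multiset.mem_cons_of_mem hC, hTrC⟩

/-! #### Forcedness predicates -/

/-- `(Fo L R C).1` : `C` is forced true by membership structure;
`(Fo L R C).2` : `C` is forced false. -/
def Fo (L R : Multiset Formula) : Formula → Prop × Prop
  | .atom p => (Formula.atom p ∈ L, Formula.atom p ∈ R)
  | .bot => (Formula.bot ∈ L, True)
  | .imp A B => (Formula.imp A B ∈ L ∨ (Fo L R A).2 ∨ (Fo L R B).1,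
                 Formula.imp A B ∈ R ∨ ((Fo L R A).1 ∧ (Fo L R B).2))
  | .box A => (Formula.box A ∈ L, Formula.box A ∈ R ∨ (Fo L R A).2)

def FL (L R : Multiset Formula) (C : Formula) : Prop := (Fo L R C).1
def FR (L R : Multiset Formula) (C : Formula) : Prop := (Fo L R C).2

lemma FL_of_mem {L R : Multiset Formula} {C : Formula} (h : C ∈ L) : FL L R C := by
  cases C with
  | atom p => exact h
  | bot => exact h
  | imp A B => exact Or.inl h
  | box A => exact h

lemma FR_of_mem {L R : Multiset Formula} {C : Formula} (h : C ∈ R) : FR L R C := by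
  cases C with
  | atom p => exact h
  | bot => trivial
  | imp A B => exact Or.inl h
  | box A => exact Or.inl h

lemma Fo_mono {L R L' R' : Multiset Formula}
    (hL : ∀ X, X ∈ L → X ∈ L' ∨ FL L' R' X)
    (hR : ∀ X, X ∈ R → X ∈ R' ∨ FR L' R' X) :
    ∀ C, (FL L R C → FL L' R' C) ∧ (FR L R C → FR L' R' C) := by
  intro C
  induction C with
  | atom p =>
      exact ⟨fun h => (hL _ h).elim id id, fun h => (hR _ h).elim id id⟩
  | bot =>
      exact ⟨fun h => (hL _ h).elim id id, fun _ => trivial⟩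
  | imp A B ihA ihB =>
      constructor
      · rintro (h | h | h)
        · rcases hL _ h with h' | h'
          · exact Or.inl h'
          · exact h'
        · exact Or.inr (Or.inl (ihA.2 h))
        · exact Or.inr (Or.inr (ihB.1 h))
      · rintro (h | ⟨ha, hb⟩)
        · rcases hR _ h with h' | h'
          · exact Or.inl h'
          · exact h'
        · exact Or.inr ⟨ihA.1 ha, ihB.2 hb⟩
  | box A ihA =>
      constructor
      · intro h
        exact (hL _ h).elim id id
      · rintro (h | h)
        · rcases hR _ h with h' | h'
          · exact Or.inl h'
          · exact h'
        · exact Or.inr (ihA.2 h)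

/-! #### The machine -/

def isBoxF : Formula → Bool
  | .box _ => true
  | _ => false

def isImpF : Formula → Bool
  | .imp _ _ => true
  | _ => false

def unboxF : Formula → Option Formula
  | .box B => some B
  | _ => none

def unbox (L : Multiset Formula) : Multiset Formula := L.filterMap unboxF

def sz : Formula → ℕ
  | .bot => 1
  | .atom _ => 1
  | .imp A B => sz A + sz B + 1
  | .box A => sz A + 1

lemma boxed_unbox_mem {L : Multiset Formula} {X : Formula} :
    X ∈ boxed (unbox L) ↔ (∃ B, X = Formula.box B) ∧ X ∈ L := by
  constructor
  · intro h
    obtain ⟨B, hB, rfl⟩ := Multiset.mem_map.mp h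
    obtain ⟨Y, hY, hunb⟩ := (Multiset.mem_filterMap _ _).mp hB
    cases Y with
    | box C => simp [unboxF] at hunb; subst hunb; exact ⟨⟨C, rfl⟩, hY⟩
    | atom p => simp [unboxF] at hunb
    | bot => simp [unboxF] at hunb
    | imp a b => simp [unboxF] at hunb
  · rintro ⟨⟨B, rfl⟩, hL⟩
    exact Multiset.mem_map.mpr ⟨B, (Multiset.mem_filterMap _ _).mpr ⟨_, hL, rfl⟩, rfl⟩

lemma boxed_unbox (L : Multiset Formula) :
    boxed (unbox L) = L.filter (fun x => isBoxF x = true) := by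
  rw [boxed, unbox]
  induction L using Multiset.induction_on with
  | empty => simp
  | cons a s ih =>
      cases a with
      | box B =>
          rw [Multiset.filterMap_cons_some _ _ _ (by rfl : unboxF (Formula.box B) = some B),
            Multiset.map_cons, Multiset.filter_cons_of_pos _ (by simp [isBoxF]), ih]
      | atom p =>
          rw [Multiset.filterMap_cons_none _ _ (by rfl), Multiset.filter_cons_of_neg _ (by simp [isBoxF]), ih]
      | bot =>
          rw [Multiset.filterMap_cons_none _ _ (by rfl), Multiset.filter_cons_of_neg _ (by simp [isBoxF]), ih]
      | imp a b =>
          rw [Multiset.filterMap_cons_none _ _ (by rfl), Multiset.filter_cons_of_neg _ (by simp [isBoxF]), ih]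

lemma L_split (L : Multiset Formula) :
    L.filter (fun x => ¬ isBoxF x = true) + boxed (unbox L) = L := by
  rw [boxed_unbox]
  rw [add_comm]
  exact Multiset.filter_add_not _ L

/-- Machine states: antecedent, succedent, multiset of unprocessed boxes. -/
structure MSt : Type where
  L : Multiset Formula
  R : Multiset Formula
  U : Multiset Formula

open Classical in
/-- One machine transition: the rule applied at a state and the children states. -/
noncomputable def next (st : MSt) : Option (Rule × Option MSt × Option MSt) :=
  if _ : ∃ p, Formula.atom p ∈ st.L ∧ Formula.atom p ∈ st.R then some (.ax, none, none)
  else if _ : Formula.bot ∈ st.L then some (.axBot, none, none)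
  else if h3 : ∃ A B, Formula.imp A B ∈ st.L then
    some (.impL,
      some ⟨h3.choose_spec.choose ::ₘ st.L.erase (.imp h3.choose h3.choose_spec.choose), st.R,
            st.U + (if isBoxF h3.choose_spec.choose then {h3.choose_spec.choose} else 0)⟩,
      some ⟨st.L.erase (.imp h3.choose h3.choose_spec.choose), h3.choose ::ₘ st.R, st.U⟩)
  else if h4 : ∃ A B, Formula.imp A B ∈ st.R then
    some (.impR,
      some ⟨h4.choose ::ₘ st.L,
            h4.choose_spec.choose ::ₘ st.R.erase (.imp h4.choose h4.choose_spec.choose),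
            st.U + (if isBoxF h4.choose then {h4.choose} else 0)⟩, none)
  else if h5 : ∃ B, Formula.box B ∈ st.U ∧ Formula.box B ∈ st.L then
    some (.refl,
      some ⟨h5.choose ::ₘ st.L, st.R,
            st.U.erase (.box h5.choose) + (if isBoxF h5.choose then {h5.choose} else 0)⟩, none)
  else if h6 : ∃ A, Formula.box A ∈ st.R ∧ Valid (boxed (unbox st.L), {A}) then
    some (.box,
      some ⟨st.L, h6.choose ::ₘ st.R.erase (.box h6.choose), st.U⟩,
      some ⟨boxed (unbox st.L), {h6.choose}, boxed (unbox st.L)⟩)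
  else none

/-- Specification of `next`. -/
inductive NS (st : MSt) : Option (Rule × Option MSt × Option MSt) → Prop
  | ax (p : ℕ) (h1 : Formula.atom p ∈ st.L) (h2 : Formula.atom p ∈ st.R) :
      NS st (some (.ax, none, none))
  | axBot (h : Formula.bot ∈ st.L) : NS st (some (.axBot, none, none))
  | impL (A B : Formula) (h : Formula.imp A B ∈ st.L) :
      NS st (some (.impL,
        some ⟨B ::ₘ st.L.erase (.imp A B), st.R, st.U + (if isBoxF B then {B} else 0)⟩,
        some ⟨st.L.erase (.imp A B), A ::ₘ st.R, st.U⟩))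
  | impR (A B : Formula) (h : Formula.imp A B ∈ st.R) :
      NS st (some (.impR,
        some ⟨A ::ₘ st.L, B ::ₘ st.R.erase (.imp A B),
          st.U + (if isBoxF A then {A} else 0)⟩, none))
  | refl (B : Formula) (hU : Formula.box B ∈ st.U) (hL : Formula.box B ∈ st.L) :
      NS st (some (.refl,
        some ⟨B ::ₘ st.L, st.R,
          st.U.erase (.box B) + (if isBoxF B then {B} else 0)⟩, none))
  | box (A : Formula) (hR : Formula.box A ∈ st.R)
      (hval : Valid (boxed (unbox st.L), {A})) :
      NS st (some (.box,
        some ⟨st.L, A ::ₘ st.R.erase (.box A), st.U⟩,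
        some ⟨boxed (unbox st.L), {A}, boxed (unbox st.L)⟩))
  | dead (h1 : ¬∃ p, Formula.atom p ∈ st.L ∧ Formula.atom p ∈ st.R)
      (h2 : Formula.bot ∉ st.L)
      (h3 : ¬∃ A B, Formula.imp A B ∈ st.L)
      (h4 : ¬∃ A B, Formula.imp A B ∈ st.R)
      (h5 : ¬∃ B, Formula.box B ∈ st.U ∧ Formula.box B ∈ st.L)
      (h6 : ¬∃ A, Formula.box A ∈ st.R ∧ Valid (boxed (unbox st.L), {A})) :
      NS st none

lemma ns (st : MSt) : NS st (next st) := by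
  unfold next
  by_cases h1 : ∃ p, Formula.atom p ∈ st.L ∧ Formula.atom p ∈ st.R
  · rw [dif_pos h1]
    exact NS.ax h1.choose h1.choose_spec.1 h1.choose_spec.2
  · rw [dif_neg h1]
    by_cases h2 : Formula.bot ∈ st.L
    · rw [dif_pos h2]; exact NS.axBot h2
    · rw [dif_neg h2]
      by_cases h3 : ∃ A B, Formula.imp A B ∈ st.L
      · rw [dif_pos h3]
        exact NS.impL h3.choose h3.choose_spec.choose h3.choose_spec.choose_spec
      · rw [dif_neg h3]
        by_cases h4 : ∃ A B, Formula.imp A B ∈ st.R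
        · rw [dif_pos h4]
          exact NS.impR h4.choose h4.choose_spec.choose h4.choose_spec.choose_spec
        · rw [dif_neg h4]
          by_cases h5 : ∃ B, Formula.box B ∈ st.U ∧ Formula.box B ∈ st.L
          · rw [dif_pos h5]
            exact NS.refl h5.choose h5.choose_spec.1 h5.choose_spec.2
          · rw [dif_neg h5]
            by_cases h6 : ∃ A, Formula.box A ∈ st.R ∧ Valid (boxed (unbox st.L), {A})
            · rw [dif_pos h6]
              exact NS.box h6.choose h6.choose_spec.1 h6.choose_spec.2
            · rw [dif_neg h6]
              exact NS.dead h1 h2 h3 h4 h5 h6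
/-! ### Section 4: the measure and the invariants -/

def wtL (x : Formula) : ℕ := if isImpF x then sz x else 0
def wtR (x : Formula) : ℕ := if isImpF x || isBoxF x then sz x else 0

noncomputable def mu (st : MSt) : ℕ :=
  (st.L.map wtL).sum + (st.R.map wtR).sum + (st.U.map sz).sum

lemma sum_map_erase (f : Formula → ℕ) {s : Multiset Formula} {x : Formula} (h : x ∈ s) :
    (s.map f).sum = f x + ((s.erase x).map f).sum := by
  conv_lhs => rw [← Multiset.cons_erase h]
  rw [Multiset.map_cons, Multiset.sum_cons]

lemma ite_box_sum (B : Formula) :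
    (((if isBoxF B then ({B} : Multiset Formula) else 0)).map sz).sum
      = if isBoxF B then sz B else 0 := by
  split <;> simp

lemma wt_newL (B : Formula) : wtL B + (if isBoxF B then sz B else 0) ≤ sz B := by
  cases B <;> simp [wtL, isImpF, isBoxF, sz]

lemma wt_newR (B : Formula) : wtR B ≤ sz B := by
  cases B <;> simp [wtR, isImpF, isBoxF, sz]

lemma mu_dec1 {st : MSt} {r : Rule} {c : MSt} {c2 : Option MSt}
    (h : NS st (some (r, some c, c2))) : mu c < mu st := by
  cases h with
  | impL A B hm =>
      have h1 := sum_map_erase wtL hm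
      have h2 : wtL (Formula.imp A B) = sz A + sz B + 1 := by simp [wtL, isImpF, sz]
      have h3 := wt_newL B
      simp only [mu, Multiset.map_cons, Multiset.sum_cons, Multiset.map_add,
        Multiset.sum_add, ite_box_sum]
      omega
  | impR A B hm =>
      have h1 := sum_map_erase wtR hm
      have h2 : wtR (Formula.imp A B) = sz A + sz B + 1 := by simp [wtR, isImpF, sz]
      have h3 := wt_newL A
      have h4 := wt_newR B
      simp only [mu, Multiset.map_cons, Multiset.sum_cons, Multiset.map_add,
        Multiset.sum_add, ite_box_sum]
      omega
  | refl B hU hL =>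
      have h1 := sum_map_erase sz hU
      have h2 : sz (Formula.box B) = sz B + 1 := by simp [sz]
      have h3 := wt_newL B
      simp only [mu, Multiset.map_cons, Multiset.sum_cons, Multiset.map_add,
        Multiset.sum_add, ite_box_sum]
      omega
  | box A hR hval =>
      have h1 := sum_map_erase wtR hR
      have h2 : wtR (Formula.box A) = sz A + 1 := by simp [wtR, isImpF, isBoxF, sz]
      have h4 := wt_newR A
      simp only [mu, Multiset.map_cons, Multiset.sum_cons, Multiset.map_add,
        Multiset.sum_add]
      omega

lemma mu_dec2 {st : MSt} {r : Rule} {c1 : Option MSt} {c : MSt}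
    (h : NS st (some (r, c1, some c))) (hr : r ≠ Rule.box) : mu c < mu st := by
  cases h with
  | impL A B hm =>
      have h1 := sum_map_erase wtL hm
      have h2 : wtL (Formula.imp A B) = sz A + sz B + 1 := by simp [wtL, isImpF, sz]
      have h4 := wt_newR A
      have h5 : 0 < sz B := by cases B <;> simp [sz]
      simp only [mu, Multiset.map_cons, Multiset.sum_cons]
      omega
  | box A hR hval => exact absurd rfl hr

/-! #### Invariants -/

def MInv (st : MSt) : Prop :=
  ∀ B, Formula.box B ∈ st.L → Formula.box B ∈ st.U ∨ FL st.L st.R B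

def VSt (st : MSt) : Prop := Valid (st.L, st.R) ∧ MInv st

lemma mem_or_eq_of_mem_cons {x y : Formula} {s : Multiset Formula}
    (h : x ∈ y ::ₘ s) : x = y ∨ x ∈ s := Multiset.mem_cons.mp h

lemma mem_erase_or_eq {x y : Formula} {s : Multiset Formula} (h : x ∈ s) :
    x ∈ s.erase y ∨ x = y := by
  by_cases hxy : x = y
  · exact Or.inr hxy
  · exact Or.inl ((Multiset.mem_erase_of_ne hxy).mpr h)

lemma vst_pres {st : MSt} {r : Rule} {c1 c2 : Option MSt}
    (h : NS st (some (r, c1, c2))) (hv : VSt st) :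
    (∀ c, c1 = some c → VSt c) ∧ (∀ c, c2 = some c → VSt c) := by
  obtain ⟨hval, hinv⟩ := hv
  cases h with
  | ax p h1 h2 => exact ⟨by rintro c ⟨⟩, by rintro c ⟨⟩⟩
  | axBot h => exact ⟨by rintro c ⟨⟩, by rintro c ⟨⟩⟩
  | impL A B hm =>
      constructor
      · rintro c ⟨rfl⟩
        set e := Formula.imp A B with he
        set L₀ := st.L.erase e with hL0
        have hsplit : st.L = e ::ₘ L₀ := (Multiset.cons_erase hm).symm
        constructor
        · -- validity
          have : Valid (e ::ₘ L₀, st.R) := by rw [← hsplit]; exact hval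
          exact valid_impL1 this
        · -- Inv
          intro X hX
          rcases mem_or_eq_of_mem_cons hX with hXB | hX'
          · -- box X = B
            left
            rw [Multiset.mem_add]
            right
            rw [← hXB] at *
            simp [isBoxF]
          · have hXL : Formula.box X ∈ st.L := hsplit ▸ Multiset.mem_cons_of_mem hX'
            rcases hinv X hXL with hU | hFL
            · left; rw [Multiset.mem_add]; left; exact hU
            · right
              refine (Fo_mono ?_ ?_ X).1 hFL
              · intro Y hY
                rw [hsplit] at hY
                rcases mem_or_eq_of_mem_cons hY with rfl | hY'
                · right
                  exact Or.inr (Or.inr (FL_of_mem (Multiset.mem_cons_self _ _)))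
                · left; exact Multiset.mem_cons_of_mem hY'
              · intro Y hY; left; exact hY
      · rintro c ⟨rfl⟩
        set e := Formula.imp A B with he
        set L₀ := st.L.erase e with hL0
        have hsplit : st.L = e ::ₘ L₀ := (Multiset.cons_erase hm).symm
        constructor
        · have : Valid (e ::ₘ L₀, st.R) := by rw [← hsplit]; exact hval
          exact valid_impL2 this
        · intro X hX
          have hXL : Formula.box X ∈ st.L := hsplit ▸ Multiset.mem_cons_of_mem hX
          rcases hinv X hXL with hU | hFL
          · left; exact hU
          · right
            refine (Fo_mono ?_ ?_ X).1 hFL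
            · intro Y hY
              rw [hsplit] at hY
              rcases mem_or_eq_of_mem_cons hY with rfl | hY'
              · right
                exact Or.inr (Or.inl (FR_of_mem (Multiset.mem_cons_self _ _)))
              · left; exact hY'
            · intro Y hY; left; exact Multiset.mem_cons_of_mem hY
  | impR A B hm =>
      constructor
      · rintro c ⟨rfl⟩
        set e := Formula.imp A B with he
        set R₀ := st.R.erase e with hR0
        have hsplit : st.R = e ::ₘ R₀ := (Multiset.cons_erase hm).symm
        constructor
        · have : Valid (st.L, e ::ₘ R₀) := by rw [← hsplit]; exact hval
          exact valid_impR this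
        · intro X hX
          rcases mem_or_eq_of_mem_cons hX with hXA | hX'
          · left
            rw [Multiset.mem_add]
            right
            rw [← hXA] at *
            simp [isBoxF]
          · rcases hinv X hX' with hU | hFL
            · left; rw [Multiset.mem_add]; left; exact hU
            · right
              refine (Fo_mono ?_ ?_ X).1 hFL
              · intro Y hY; left; exact Multiset.mem_cons_of_mem hY
              · intro Y hY
                rw [hsplit] at hY
                rcases mem_or_eq_of_mem_cons hY with rfl | hY'
                · right
                  refine Or.inr ⟨FL_of_mem (Multiset.mem_cons_self _ _),
                    FR_of_mem (Multiset.mem_cons_self _ _)⟩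
                · left; exact Multiset.mem_cons_of_mem hY'
      · rintro c ⟨⟩
  | refl B hU hL =>
      constructor
      · rintro c ⟨rfl⟩
        constructor
        · exact valid_weakL B hval
        · intro X hX
          rcases mem_or_eq_of_mem_cons hX with hXB | hX'
          · left
            rw [Multiset.mem_add]
            right
            rw [← hXB] at *
            simp [isBoxF]
          · rcases hinv X hX' with hU' | hFL
            · rcases mem_erase_or_eq (y := Formula.box B) hU' with h1 | h1
              · left; rw [Multiset.mem_add]; left; exact h1
              · right
                have : X = B := by injection h1
                subst this
                exact FL_of_mem (Multiset.mem_cons_self _ _)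
            · right
              refine (Fo_mono ?_ ?_ X).1 hFL
              · intro Y hY; left; exact Multiset.mem_cons_of_mem hY
              · intro Y hY; left; exact hY
      · rintro c ⟨⟩
  | box A hR hval' =>
      constructor
      · rintro c ⟨rfl⟩
        set e := Formula.box A with he
        set R₀ := st.R.erase e with hR0
        have hsplit : st.R = e ::ₘ R₀ := (Multiset.cons_erase hR).symm
        constructor
        · have : Valid (st.L, e ::ₘ R₀) := by rw [← hsplit]; exact hval
          exact valid_boxL this
        · intro X hX
          rcases hinv X hX with hU | hFL
          · left; exact hU
          · right
            refine (Fo_mono ?_ ?_ X).1 hFL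
            · intro Y hY; left; exact hY
            · intro Y hY
              rw [hsplit] at hY
              rcases mem_or_eq_of_mem_cons hY with rfl | hY'
              · right
                exact Or.inr (FR_of_mem (Multiset.mem_cons_self _ _))
              · left; exact Multiset.mem_cons_of_mem hY'
      · rintro c ⟨rfl⟩
        constructor
        · exact hval'
        · intro X hX
          left
          exact hX
/-! ### Section 5: countermodel constructions and the progress lemma -/

lemma not_valid_elim {S : Sequent} (h : ¬ Valid S) :
    ∃ (W : Type) (_ : PartialOrder W) (_ : Finite W) (val : ℕ → W → Prop) (x : W),
      (∀ B ∈ S.1, Tr val B x) ∧ (∀ C ∈ S.2, ¬ Tr val C x) := by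
  by_contra hc
  apply h
  intro W pw fw val x hx
  by_contra hc2
  push_neg at hc2
  exact hc ⟨W, pw, fw, val, x, hx, hc2⟩

lemma tr_subtype {W : Type} [PartialOrder W] (val : ℕ → W → Prop) (x : W) :
    ∀ (B : Formula) (z : {y : W // x ≤ y}),
      Tr (fun p z => val p z.1) B z ↔ Tr val B z.1 := by
  intro B
  induction B with
  | atom p => intro z; exact Iff.rfl
  | bot => intro z; exact Iff.rfl
  | imp A B ihA ihB => intro z; exact imp_congr (ihA z) (ihB z)
  | box A ihA =>
      intro z
      constructor
      · intro h y hy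
        have := h ⟨y, le_trans z.2 hy⟩ hy
        exact (ihA _).mp this
      · intro h zy hzy
        exact (ihA _).mpr (h zy.1 hzy)

lemma exists_rooted_cm {S : Sequent} (h : ¬ Valid S) :
    ∃ (W : Type) (_ : PartialOrder W) (_ : Finite W) (val : ℕ → W → Prop) (x : W),
      (∀ B ∈ S.1, Tr val B x) ∧ (∀ C ∈ S.2, ¬ Tr val C x) ∧ (∀ y, x ≤ y) := by
  obtain ⟨W, pw, fw, val, x, hx, hnc⟩ := not_valid_elim h
  refine ⟨{y : W // x ≤ y}, inferInstance, inferInstance, fun p z => val p z.1,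
    ⟨x, le_refl x⟩, ?_, ?_, ?_⟩
  · intro B hB
    exact (tr_subtype val x B _).mpr (hx B hB)
  · intro C hC htr
    exact hnc C hC ((tr_subtype val x C _).mp htr)
  · intro y
    exact y.2

/-! #### Merged models -/

section Merge

variable {I : Type} (Wf : I → Type)

/-- Disjoint union of a family of pointed models with a new root below all of them. -/
inductive MergeW (Wf : I → Type) : Type
  | root : MergeW Wf
  | node (i : I) (y : Wf i) : MergeW Wf

variable [∀ i, PartialOrder (Wf i)]

def mergeLE : MergeW Wf → MergeW Wf → Prop
  | .root, _ => True
  | .node _ _, .root => False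
  | .node i u, .node j v => ∃ h : i = j, (h ▸ u) ≤ v

instance mergePO : PartialOrder (MergeW Wf) where
  le := mergeLE Wf
  le_refl := by
    rintro (_ | ⟨i, u⟩)
    · trivial
    · exact ⟨rfl, le_refl u⟩
  le_trans := by
    rintro (_ | ⟨i, u⟩) (_ | ⟨j, v⟩) (_ | ⟨k, w⟩) h1 h2
    · exact trivial
    · exact trivial
    · exact trivial
    · exact trivial
    · exact (h1 : False).elim
    · exact (h1 : False).elim
    · exact (h2 : False).elim
    · obtain ⟨hij, huv⟩ := h1
      obtain ⟨hjk, hvw⟩ := h2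
      subst hij; subst hjk
      exact ⟨rfl, le_trans huv hvw⟩
  le_antisymm := by
    rintro (_ | ⟨i, u⟩) (_ | ⟨j, v⟩) h1 h2
    · rfl
    · exact (h2 : False).elim
    · exact (h1 : False).elim
    · obtain ⟨hij, huv⟩ := h1
      subst hij
      obtain ⟨hji, hvu⟩ := h2
      try dsimp only at hvu huv
      rw [le_antisymm huv hvu]

instance [Finite I] [∀ i, Finite (Wf i)] : Finite (MergeW Wf) := by
  apply Finite.of_injective (fun w : MergeW Wf =>
    match w with
    | .root => (Sum.inl () : Unit ⊕ ((i : I) × Wf i))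
    | .node i y => Sum.inr ⟨i, y⟩)
  rintro (_ | ⟨i, u⟩) (_ | ⟨j, v⟩) h
  · rfl
  · exact absurd h (by simp)
  · exact absurd h (by simp)
  · have h' := Sum.inr.inj h
    cases h'
    rfl

lemma merge_none_le (w : MergeW Wf) : (MergeW.root : MergeW Wf) ≤ w := trivial

lemma merge_some_le_none {i : I} {u : Wf i} : ¬ (MergeW.node i u : MergeW Wf) ≤ .root :=
  fun h => h

lemma tr_merge_some (valm : ℕ → MergeW Wf → Prop) (i : I) :
    ∀ (B : Formula) (y : Wf i),
      Tr valm B (.node i y) ↔ Tr (fun p z => valm p (.node i z)) B y := by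
  intro B
  induction B with
  | atom p => intro y; exact Iff.rfl
  | bot => intro y; exact Iff.rfl
  | imp A B ihA ihB => intro y; exact imp_congr (ihA y) (ihB y)
  | box A ihA =>
      intro y
      constructor
      · intro h z hz
        exact (ihA z).mp (h (.node i z) ⟨rfl, hz⟩)
      · intro h w hw
        match w, hw with
        | .root, hw => exact absurd hw (merge_some_le_none Wf)
        | .node j z, hw =>
            obtain ⟨hij, hyz⟩ := hw
            subst hij
            exact (ihA z).mpr (h z hyz)

end Merge

/-- The progress lemma: a state whose sequent is valid and whose invariant holds
is never stuck. -/
lemma not_dead {st : MSt} (hv : VSt st) : next st ≠ none := by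
  intro hdead
  have hns := ns st
  rw [hdead] at hns
  cases hns with
  | dead h1 h2 h3 h4 h5 h6 =>
  obtain ⟨hval, hinv⟩ := hv
  have hforced : ∀ B, Formula.box B ∈ st.L → FL st.L st.R B := by
    intro B hB
    rcases hinv B hB with hU | h
    · exact absurd ⟨B, hU, hB⟩ h5
    · exact h
  -- the index type of boxes on the right
  let I : Type := {A : Formula // Formula.box A ∈ st.R}
  haveI : Finite I := by
    have h1' : {x : Formula | x ∈ st.R}.Finite := st.R.finite_toSet
    have h2' : {A : Formula | Formula.box A ∈ st.R}.Finite := by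
      refine Set.Finite.preimage ?_ h1'
      intro a _ b _ hab
      injection hab
    exact h2'.to_subtype
  have H : ∀ i : I, ∃ (W : Type) (_ : PartialOrder W) (_ : Finite W)
      (val : ℕ → W → Prop) (x : W),
      (∀ B ∈ boxed (unbox st.L), Tr val B x) ∧
      (∀ C ∈ ({i.1} : Multiset Formula), ¬ Tr val C x) ∧ (∀ y, x ≤ y) := by
    intro i
    exact exists_rooted_cm (S := (boxed (unbox st.L), ({i.1} : Multiset Formula)))
      (fun hvv => h6 ⟨i.1, i.2, hvv⟩)
  let Wf : I → Type := fun i => (H i).choose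
  letI POf : ∀ i, PartialOrder (Wf i) := fun i => (H i).choose_spec.choose
  haveI Ff : ∀ i, Finite (Wf i) := fun i => (H i).choose_spec.choose_spec.choose
  let valf : ∀ i, ℕ → Wf i → Prop :=
    fun i => (H i).choose_spec.choose_spec.choose_spec.choose
  let rootf : ∀ i, Wf i :=
    fun i => (H i).choose_spec.choose_spec.choose_spec.choose_spec.choose
  have hprops : ∀ i : I,
      (∀ B ∈ boxed (unbox st.L), Tr (valf i) B (rootf i)) ∧
      (¬ Tr (valf i) i.1 (rootf i)) ∧ (∀ y, rootf i ≤ y) := by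
    intro i
    have hs := (H i).choose_spec.choose_spec.choose_spec.choose_spec.choose_spec
    exact ⟨hs.1, hs.2.1 i.1 (Multiset.mem_singleton_self _), hs.2.2⟩
  -- the merged model
  let valm : ℕ → MergeW Wf → Prop := fun p w =>
    match w with
    | .root => Formula.atom p ∈ st.L
    | .node i z => valf i p z
  -- truth of formulas true at all roots of components
  have htr_some : ∀ (C : Formula), Formula.box C ∈ st.L →
      ∀ (i : I) (y : Wf i), Tr valm C (.node i y) := by
    intro C hC i y
    have hmem : Formula.box C ∈ boxed (unbox st.L) :=
      boxed_unbox_mem.mpr ⟨⟨C, rfl⟩, hC⟩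
    have hbox : Tr (valf i) (Formula.box C) (rootf i) := (hprops i).1 _ hmem
    have hCy : Tr (valf i) C y := hbox y ((hprops i).2.2 y)
    exact (tr_merge_some Wf valm i C y).mpr hCy
  -- main truth lemma at the new root
  have main : ∀ C : Formula,
      (FL st.L st.R C → Tr valm C .root) ∧ (FR st.L st.R C → ¬ Tr valm C .root) := by
    intro C
    induction C with
    | atom p =>
        constructor
        · intro h; exact h
        · intro h htr; exact h1 ⟨p, htr, h⟩
    | bot =>
        constructor
        · intro h; exact absurd h h2
        · intro _ htr; exact htr
    | imp A B ihA ihB =>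
        constructor
        · rintro (h | h | h)
          · exact absurd ⟨A, B, h⟩ h3
          · intro hA; exact absurd hA (ihA.2 h)
          · intro _; exact ihB.1 h
        · rintro (h | ⟨ha, hb⟩)
          · exact absurd ⟨A, B, h⟩ h4
          · intro htr
            exact ihB.2 hb (htr (ihA.1 ha))
    | box C ihC =>
        constructor
        · intro h
          intro w hw
          match w with
          | .root => exact ihC.1 (hforced C h)
          | .node i y => exact htr_some C h i y
        · rintro (h | h)
          · intro htr
            have h1' := htr (.node ⟨C, h⟩ (rootf ⟨C, h⟩)) (merge_none_le Wf _)
            have h2' := (tr_merge_some Wf valm _ C _).mp h1'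
            exact (hprops ⟨C, h⟩).2.1 h2'
          · intro htr
            exact ihC.2 h (htr .root (merge_none_le Wf .root))
  obtain ⟨C, hC, hTrC⟩ := hval (MergeW Wf) valm .root
    (fun B hB => (main B).1 (FL_of_mem hB))
  exact (main C).2 (FR_of_mem hC) hTrC
/-! ### Section 6: from the machine to ∞-proofs -/

noncomputable def runM : MSt → List Bool → Option MSt
  | st, [] => some st
  | st, i :: a =>
      match next st with
      | none => none
      | some x =>
          match if i then x.2.2 else x.2.1 with
          | none => none
          | some c => runM c a

noncomputable def labFrom (st : MSt) : Lab := fun a =>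
  (runM st a).bind fun s => (next s).map fun x => (x.1, (s.L, s.R))

lemma runM_nil (st : MSt) : runM st [] = some st := rfl

lemma runM_cons_some {st : MSt} {x : Rule × Option MSt × Option MSt}
    (h : next st = some x) {i : Bool} {c : MSt}
    (hc : (if i then x.2.2 else x.2.1) = some c) (a : List Bool) :
    runM st (i :: a) = runM c a := by
  simp [runM, h, hc]

lemma runM_cons_none1 {st : MSt} (h : next st = none) (i : Bool) (a : List Bool) :
    runM st (i :: a) = none := by
  simp [runM, h]

lemma runM_cons_none2 {st : MSt} {x : Rule × Option MSt × Option MSt}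
    (h : next st = some x) {i : Bool}
    (hc : (if i then x.2.2 else x.2.1) = none) (a : List Bool) :
    runM st (i :: a) = none := by
  simp [runM, h, hc]

lemma runM_append (st : MSt) (a b : List Bool) :
    runM st (a ++ b) = (runM st a).bind (fun s => runM s b) := by
  induction a generalizing st with
  | nil => simp [runM_nil]
  | cons i a ih =>
      cases h : next st with
      | none => simp [runM_cons_none1 h]
      | some x =>
          cases hc : (if i then x.2.2 else x.2.1) with
          | none => simp [runM_cons_none2 h hc]
          | some c =>
              rw [List.cons_append, runM_cons_some h hc, runM_cons_some h hc, ih]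

lemma labFrom_nojunk (st : MSt) :
    ∀ (a : List Bool) (i : Bool), labFrom st a = none → labFrom st (a ++ [i]) = none := by
  intro a i h
  unfold labFrom at h ⊢
  rw [runM_append]
  cases hr : runM st a with
  | none => simp
  | some s =>
      rw [hr] at h
      simp only [Option.bind_some] at h
      have hns : next s = none := Option.map_eq_none_iff.mp h
      simp only [Option.bind_some]
      rw [show [i] = i :: ([] : List Bool) from rfl, runM_cons_none1 hns]
      rfl

lemma runM_vst : ∀ (a : List Bool) {st st' : MSt}, VSt st → runM st a = some st' → VSt st' := by
  intro a
  induction a with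
  | nil =>
      intro st st' hv h
      rw [runM_nil] at h
      injection h with h'
      rw [← h']
      exact hv
  | cons i a ih =>
      intro st st' hv h
      cases hn : next st with
      | none => rw [runM_cons_none1 hn] at h; cases h
      | some x =>
          cases hc : (if i then x.2.2 else x.2.1) with
          | none => rw [runM_cons_none2 hn hc] at h; cases h
          | some c =>
              rw [runM_cons_some hn hc] at h
              have hns := ns st
              rw [hn] at hns
              obtain ⟨r, c1, c2⟩ := x
              have hpres := vst_pres hns hv
              have hvc : VSt c := by
                cases i
                · exact hpres.1 c (by simpa using hc)
                · exact hpres.2 c (by simpa using hc)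
              exact ih hvc h

lemma labFrom_root_some {st : MSt} (hv : VSt st) : (labFrom st []).isSome := by
  unfold labFrom
  rw [runM_nil]
  simp only [Option.bind_some]
  cases hn : next st with
  | none => exact absurd hn (not_dead hv)
  | some x => rfl

lemma labFrom_step (st₀ : MSt) (hv : VSt st₀) :
    ∀ (a : List Bool) (r : Rule) (s : Sequent), labFrom st₀ a = some (r, s) →
      Inst r s ((labFrom st₀ (a ++ [false])).map Prod.snd)
        ((labFrom st₀ (a ++ [true])).map Prod.snd) := by
  intro a r s h
  unfold labFrom at h
  cases hrun : runM st₀ a with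
  | none => rw [hrun] at h; cases h
  | some st =>
      rw [hrun] at h
      simp only [Option.bind_some] at h
      cases hn : next st with
      | none => rw [hn] at h; cases h
      | some x =>
          obtain ⟨r', c1, c2⟩ := x
          rw [hn] at h
          simp only [Option.map_some] at h
          have hrs : r' = r ∧ (st.L, st.R) = s := by
            constructor
            · exact congrArg Prod.fst (Option.some.inj h)
            · exact congrArg Prod.snd (Option.some.inj h)
          obtain ⟨hr', hs'⟩ := hrs
          subst hr'
          subst hs'
          have hvst : VSt st := runM_vst a hv hrun
          have hns := ns st
          rw [hn] at hns
          have hchild : ∀ (i : Bool) (c : MSt), (if i then c2 else c1) = some c →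
              (labFrom st₀ (a ++ [i])).map Prod.snd = some ((c.L, c.R) : Sequent) := by
            intro i c hc
            have hvc : VSt c := by
              have hpres := vst_pres hns hvst
              cases i
              · exact hpres.1 c (by simpa using hc)
              · exact hpres.2 c (by simpa using hc)
            have hrc : runM st₀ (a ++ [i]) = some c := by
              rw [runM_append, hrun]
              simp only [Option.bind_some]
              rw [show [i] = i :: ([] : List Bool) from rfl, runM_cons_some hn hc, runM_nil]
            unfold labFrom
            rw [hrc]
            simp only [Option.bind_some]
            cases hnc : next c with
            | none => exact absurd hnc (not_dead hvc)
            | some y => simp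
          have hchildn : ∀ (i : Bool), (if i then c2 else c1) = none →
              (labFrom st₀ (a ++ [i])).map Prod.snd = none := by
            intro i hc
            unfold labFrom
            rw [runM_append, hrun]
            simp only [Option.bind_some]
            rw [show [i] = i :: ([] : List Bool) from rfl, runM_cons_none2 hn hc]
            rfl
          cases hns with
          | ax p h1 h2 =>
              rw [hchildn false rfl, hchildn true rfl]
              rw [← Multiset.cons_erase h1, ← Multiset.cons_erase h2]
              exact Inst.ax _ _ p
          | axBot h1 =>
              rw [hchildn false rfl, hchildn true rfl]
              rw [← Multiset.cons_erase h1]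
              exact Inst.axBot _ st.R
          | impL A B hm =>
              rw [hchild false _ rfl, hchild true _ rfl]
              dsimp only
              set L₀ := st.L.erase (Formula.imp A B) with hL0
              rw [show st.L = Formula.imp A B ::ₘ L₀ from (Multiset.cons_erase hm).symm]
              exact Inst.impL L₀ st.R A B
          | impR A B hm =>
              rw [hchild false _ rfl, hchildn true rfl]
              dsimp only
              set R₀ := st.R.erase (Formula.imp A B) with hR0
              rw [show st.R = Formula.imp A B ::ₘ R₀ from (Multiset.cons_erase hm).symm]
              exact Inst.impR st.L R₀ A B
          | refl B hU hL =>
              rw [hchild false _ rfl, hchildn true rfl]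
              dsimp only
              rw [show st.L = Formula.box B ::ₘ st.L.erase (Formula.box B) from
                (Multiset.cons_erase hL).symm]
              exact Inst.refl _ st.R B
          | box A hR hval =>
              rw [hchild false _ rfl, hchild true _ rfl]
              dsimp only
              set P := unbox st.L with hP
              set Γnb := st.L.filter (fun x => ¬ isBoxF x = true) with hG
              set R₀ := st.R.erase (Formula.box A) with hR0
              rw [show st.R = Formula.box A ::ₘ R₀ from (Multiset.cons_erase hR).symm,
                show st.L = Γnb + boxed P from (L_split st.L).symm]
              exact Inst.box Γnb R₀ A P

lemma labFrom_branch (st₀ : MSt) :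
    ∀ f : ℕ → Bool, (∀ n : ℕ, ((labFrom st₀) ((List.range n).map f)).isSome) →
      ∀ N : ℕ, ∃ n : ℕ, N ≤ n ∧ f n = true ∧
        ((labFrom st₀) ((List.range n).map f)).map Prod.fst = some Rule.box := by
  intro f hsome
  by_contra hcon
  push_neg at hcon
  obtain ⟨N, hN⟩ := hcon
  have hstate : ∀ n, ∃ stn, runM st₀ ((List.range n).map f) = some stn ∧ next stn ≠ none := by
    intro n
    have hs := hsome n
    unfold labFrom at hs
    cases hr : runM st₀ ((List.range n).map f) with
    | none => rw [hr] at hs; simp at hs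
    | some stn =>
        rw [hr] at hs
        simp only [Option.bind_some] at hs
        refine ⟨stn, rfl, ?_⟩
        intro hnone
        rw [hnone] at hs
        simp at hs
  let stn : ℕ → MSt := fun n => (hstate n).choose
  have htrans : ∀ n, ∃ x, next (stn n) = some x ∧
      (if f n then x.2.2 else x.2.1) = some (stn (n + 1)) := by
    intro n
    have h1 := (hstate n).choose_spec.1
    show ∃ x, next ((hstate n).choose) = some x ∧
      (if f n then x.2.2 else x.2.1) = some ((hstate (n + 1)).choose)
    have h2 := (hstate (n + 1)).choose_spec.1
    generalize hST : (hstate (n + 1)).choose = s1 at h2 ⊢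
    rw [List.range_succ, List.map_append, runM_append, h1] at h2
    simp only [Option.bind_some] at h2
    cases hn : next ((hstate n).choose) with
    | none =>
        rw [show (List.map f [n]) = (f n) :: ([] : List Bool) from rfl,
          runM_cons_none1 hn] at h2
        cases h2
    | some x =>
        cases hc : (if f n then x.2.2 else x.2.1) with
        | none =>
            rw [show (List.map f [n]) = (f n) :: ([] : List Bool) from rfl,
              runM_cons_none2 hn hc] at h2
            cases h2
        | some c =>
            rw [show (List.map f [n]) = (f n) :: ([] : List Bool) from rfl,
              runM_cons_some hn hc, runM_nil] at h2
            injection h2 with h2'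
            exact ⟨x, rfl, by rw [hc, h2']⟩
  have hdec : ∀ n, N ≤ n → mu (stn (n + 1)) < mu (stn n) := by
    intro n hn
    obtain ⟨x, hx, hc⟩ := htrans n
    obtain ⟨r, c1, c2⟩ := x
    have hns := ns (stn n)
    rw [hx] at hns
    by_cases hfn : f n = true
    · rw [if_pos hfn] at hc
      dsimp only at hc
      have hrule : r ≠ Rule.box := by
        intro hrr
        subst hrr
        apply hN n hn hfn
        unfold labFrom
        rw [(hstate n).choose_spec.1]
        simp only [Option.bind_some]
        have hx' : next ((hstate n).choose) = some (Rule.box, c1, c2) := hx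
        rw [hx']
        rfl
      rw [hc] at hns
      exact mu_dec2 hns hrule
    · rw [if_neg hfn] at hc
      dsimp only at hc
      rw [hc] at hns
      exact mu_dec1 hns
  have hgoal : ∀ k, mu (stn (N + k)) + k ≤ mu (stn N) := by
    intro k
    induction k with
    | zero => simp
    | succ k ih =>
        have := hdec (N + k) (by omega)
        have heq : N + (k + 1) = (N + k) + 1 := by omega
        rw [heq]
        omega
  have := hgoal (mu (stn N) + 1)
  omega

lemma memP_labFrom : ∀ (k : ℕ) (st : MSt), mu st ≤ k → MemP 1 (labFrom st) := by
  intro k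
  induction k using Nat.strong_induction_on with
  | _ k IH =>
    intro st hk
    cases hn : next st with
    | none =>
        refine MemP.leaf 1 _ (height_eq_zero_of_root_none ?_ (labFrom_nojunk st))
        unfold labFrom
        rw [runM_nil]
        simp only [Option.bind_some]
        rw [hn]
        rfl
    | some x =>
        obtain ⟨r, c1, c2⟩ := x
        have hns := ns st
        rw [hn] at hns
        have hroot : labFrom st [] = some (r, (st.L, st.R)) := by
          unfold labFrom
          rw [runM_nil]
          simp only [Option.bind_some]
          rw [hn]
          rfl
        have hshift : ∀ (i : Bool) (c : MSt), (if i then c2 else c1) = some c →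
            shift i (labFrom st) = labFrom c := by
          intro i c hc
          funext b
          show labFrom st (i :: b) = labFrom c b
          unfold labFrom
          rw [runM_cons_some hn hc]
        have hshiftn : ∀ (i : Bool), (if i then c2 else c1) = none →
            ∀ b, labFrom st (i :: b) = none := by
          intro i hc b
          unfold labFrom
          rw [runM_cons_none2 hn hc]
          rfl
        cases hns with
        | ax p h1 h2 =>
            refine MemP.leaf 1 _ (height_eq_zero_of_children_none
              (by rw [hroot]; rfl) (hshiftn false rfl []) (hshiftn true rfl [])
              (labFrom_nojunk st))
        | axBot h1 =>
            refine MemP.leaf 1 _ (height_eq_zero_of_children_none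
              (by rw [hroot]; rfl) (hshiftn false rfl []) (hshiftn true rfl [])
              (labFrom_nojunk st))
        | impL A B hm =>
            refine MemP.bin 1 _ (st.L, st.R) hroot ?_ ?_
            · rw [hshift false _ rfl]
              exact IH _ (lt_of_lt_of_le (mu_dec1 (NS.impL A B hm)) hk) _ le_rfl
            · rw [hshift true _ rfl]
              exact IH _ (lt_of_lt_of_le
                (mu_dec2 (NS.impL A B hm) (by intro hh; cases hh)) hk) _ le_rfl
        | impR A B hm =>
            refine MemP.un 1 _ Rule.impR (st.L, st.R) (Or.inl rfl) hroot ?_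
            rw [hshift false _ rfl]
            exact IH _ (lt_of_lt_of_le (mu_dec1 (NS.impR A B hm)) hk) _ le_rfl
        | refl B hU hL =>
            refine MemP.un 1 _ Rule.refl (st.L, st.R) (Or.inr rfl) hroot ?_
            rw [hshift false _ rfl]
            exact IH _ (lt_of_lt_of_le (mu_dec1 (NS.refl B hU hL)) hk) _ le_rfl
        | box A hR hval =>
            have hbox := MemP.box 0 (labFrom st) (st.L, st.R) hroot ?_ ?_
            · exact hbox
            · rw [hshift false _ rfl]
              exact IH _ (lt_of_lt_of_le (mu_dec1 (NS.box A hR hval)) hk) _ le_rfl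
            · exact MemP.zero _

/-- The ∞-proof produced by proof search from a valid state. -/
noncomputable def buildProof (st₀ : MSt) (hv : VSt st₀) : InfProof where
  lab := labFrom st₀
  root_some := labFrom_root_some hv
  nojunk := labFrom_nojunk st₀
  step := labFrom_step st₀ hv
  branch := labFrom_branch st₀

/-- Completeness: a valid sequent has an ∞-proof in 𝒫₁. -/
lemma complete {Γ Δ : Multiset Formula} (h : Valid (Γ, Δ)) :
    ∃ q : P1, Proves q.1 (Γ, Δ) := by
  have hUinv : ∀ B, Formula.box B ∈ Γ →
      Formula.box B ∈ Γ.filter (fun x => isBoxF x = true) ∨ FL Γ Δ B := by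
    intro B hB
    exact Or.inl (Multiset.mem_filter.mpr ⟨hB, by simp [isBoxF]⟩)
  have hv : VSt ⟨Γ, Δ, Γ.filter (fun x => isBoxF x = true)⟩ := ⟨h, hUinv⟩
  refine ⟨⟨buildProof _ hv, memP_labFrom (mu _) _ le_rfl⟩, ?_⟩
  show Proves (buildProof _ hv) (Γ, Δ)
  cases hn : next ⟨Γ, Δ, Γ.filter (fun x => isBoxF x = true)⟩ with
  | none => exact absurd hn (not_dead hv)
  | some x =>
      refine ⟨x.1, ?_⟩
      show labFrom _ [] = _
      unfold labFrom
      rw [runM_nil]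
      simp only [Option.bind_some]
      rw [hn]
      rfl
/-! ### Section 7: final assembly -/

noncomputable def defaultLab : Lab :=
  fun a => if a = [] then some (.axBot, ({Formula.bot}, 0)) else none

noncomputable def defaultProof : InfProof where
  lab := defaultLab
  root_some := by simp [defaultLab]
  nojunk := by
    intro a i h
    have hne : a ++ [i] ≠ [] := by simp
    simp [defaultLab, hne]
  step := by
    intro a r s h
    simp only [defaultLab] at h
    split_ifs at h with ha
    · subst ha
      injection h with h'
      cases h'
      have h1 : defaultLab ([] ++ [false]) = none := by simp [defaultLab]
      have h2 : defaultLab ([] ++ [true]) = none := by simp [defaultLab]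
      rw [h1, h2]
      exact Inst.axBot 0 0
  branch := by
    intro f hsome N
    exfalso
    have h1 := hsome 1
    have : defaultLab ((List.range 1).map f) = none := by
      have hne : (List.range 1).map f ≠ [] := by simp
      simp [defaultLab, hne]
    rw [this] at h1
    simp at h1

noncomputable def defaultP1 : P1 := by
  refine ⟨defaultProof, MemP.leaf 1 _ (height_eq_zero_of_children_none ?_ ?_ ?_ defaultProof.nojunk)⟩
  · simp [defaultProof, defaultLab]
  · show defaultLab [false] = none
    simp [defaultLab]
  · show defaultLab [true] = none
    simp [defaultLab]
/-- for every formula A there is an A-reducing mapping. -/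
theorem exists_reducing (A : Formula) : ∃ R : P1 → P1 → P1, Reducing A R := by
  classical
  let pick : Sequent → P1 := fun S =>
    if h : ∃ q : P1, Proves q.1 S then h.choose else defaultP1
  have pick_proves : ∀ S : Sequent, (∃ q : P1, Proves q.1 S) → Proves (pick S).1 S := by
    intro S h
    show Proves (if h : ∃ q : P1, Proves q.1 S then h.choose else defaultP1).1 S
    rw [dif_pos h]
    exact h.choose_spec
  refine ⟨fun p₁ _ => pick ((rootSeq p₁.1).1, (rootSeq p₁.1).2.erase A), ?_, ?_⟩
  · -- nonexpansiveness
    intro n p₁ p₂ q₁ q₂ h1 _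
    cases n with
    | zero => exact Sim.zero _ _
    | succ m =>
        have hroot : rootSeq p₁.1 = rootSeq q₁.1 := by
          unfold rootSeq
          rw [sim_root_eq h1]
        show Sim (m + 1) (pick ((rootSeq p₁.1).1, (rootSeq p₁.1).2.erase A)).1.lab
          (pick ((rootSeq q₁.1).1, (rootSeq q₁.1).2.erase A)).1.lab
        rw [hroot]
        exact sim_refl (m + 1) _ (pick _).1.good
  · -- reduction of cuts
    intro p₁ p₂ Γ Δ h1 h2
    obtain ⟨r1, hr1⟩ := h1
    have hroot : rootSeq p₁.1 = (Γ, A ::ₘ Δ) := by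
      unfold rootSeq
      rw [hr1]
      rfl
    have htarget : (((rootSeq p₁.1).1 : Multiset Formula),
        (rootSeq p₁.1).2.erase A) = (Γ, Δ) := by
      rw [hroot]
      simp [Multiset.erase_cons_head]
    have hval : Valid (Γ, Δ) :=
      valid_cut A (sound p₁.1 _ ⟨r1, hr1⟩) (sound p₂.1 _ h2)
    have hex : ∃ q : P1, Proves q.1 (Γ, Δ) := complete hval
    show Proves (pick ((rootSeq p₁.1).1, (rootSeq p₁.1).2.erase A)).1 (Γ, Δ)
    rw [htarget]
    exact pick_proves _ hex
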